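/- Let ℓ,m ≥ 1 and let λ = ((ℓ+1)^m) and μ = (ℓ^{m−1},0) in P_{m,ℓ}. Then the map p ↦ λ̂ ∖ π(p) gives a bijection from the disjoint union ⨆_{i=0}^∞ L((1,ℓ+1−i),(m,1−i)) of sets of lattice paths onto the set E_{λ̂}(μ̂) of cylindric excited diagrams of μ̂ in λ̂. -/

import Mathlib

open scoped BigOperators

/-- A cell of the plane `ℤ²`. -/
abbrev Cell : Type := ℤ × ℤ

/-- The partial order `⊴` on `ℤ²`: `(a,b) ⊴ (a',b')` iff `a ≥ a'` and `b ≥ b'`. -/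
def cellLE (u v : Cell) : Prop := v.1 ≤ u.1 ∧ v.2 ≤ u.2

/-- The cylinder `C_ω = ℤ²/ℤω`. -/
abbrev Cyl (ω : Cell) : Type := Cell ⧸ AddSubgroup.zmultiples ω

/-- The natural projection `π : ℤ² → C_ω`. -/
def pr (ω : Cell) : Cell → Cyl ω := QuotientAddGroup.mk

/-- The induced relation `⊴` on the cylinder: `x ⊴ y` iff some lifts satisfy `x̃ ⊴ ỹ`. -/
def cylLE (ω : Cell) (x y : Cyl ω) : Prop :=
  ∃ u v : Cell, pr ω u = x ∧ pr ω v = y ∧ cellLE u v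

/-- The hook of `x` in a diagram `Θ ⊆ ℤ²`. -/
def hookSet (Θ : Set Cell) (x : Cell) : Set Cell :=
  Θ ∩ ({y | ∃ k : ℤ, 0 ≤ k ∧ y = x + (k, 0)} ∪ {y | ∃ k : ℤ, 1 ≤ k ∧ y = x + (0, k)})

/-- The hook length of `x` in `Θ`. -/
noncomputable def hookLen (Θ : Set Cell) (x : Cell) : ℕ := (hookSet Θ x).ncard

/-- The hook length of a cell of the cylinder, computed via a lift. -/
noncomputable def cylHook (ω : Cell) (Θ : Set Cell) (x : Cyl ω) : ℕ :=
  hookLen Θ (Quotient.out x)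

/-- The `ℤω`-orbit of a cell. -/
def zline (ω y : Cell) : Set Cell := {z | ∃ k : ℤ, z = y + k • ω}

/-- `S + ℤω`. -/
def perClosure (ω : Cell) (S : Set Cell) : Set Cell := {z | ∃ y ∈ S, ∃ k : ℤ, z = y + k • ω}

/-- Translation of a set of cells by `u`. -/
def shiftSet (u : Cell) (S : Set Cell) : Set Cell := (· + u) '' S

/-- The semi-infinite diagram `λ̄ = {(a,b) : 1 ≤ a ≤ m, b ≤ λ_a}`. -/
def lowerDiag (m : ℤ) (lam : ℤ → ℤ) : Set Cell := {p | 1 ≤ p.1 ∧ p.1 ≤ m ∧ p.2 ≤ lam p.1}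

/-- The Young diagram `{(a,b) : 1 ≤ a ≤ m, 1 ≤ b ≤ λ_a}`. -/
def youngDiag (m : ℤ) (lam : ℤ → ℤ) : Set Cell :=
  {p | 1 ≤ p.1 ∧ p.1 ≤ m ∧ 1 ≤ p.2 ∧ p.2 ≤ lam p.1}

/-- The skew diagram `λ/μ = {(a,b) : 1 ≤ a ≤ m, μ_a < b ≤ λ_a}`. -/
def skewDiag (m : ℤ) (lam mu : ℤ → ℤ) : Set Cell :=
  {p | 1 ≤ p.1 ∧ p.1 ≤ m ∧ mu p.1 < p.2 ∧ p.2 ≤ lam p.1}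

/-- The periodic diagram `λ̃ = λ̄ + ℤ(m,−ℓ)`. -/
def perDiag (m l : ℤ) (lam : ℤ → ℤ) : Set Cell := perClosure (m, -l) (lowerDiag m lam)

/-- The cylindric diagram `λ̂ = π(λ̃)`. -/
def cylDiag (m l : ℤ) (lam : ℤ → ℤ) : Set (Cyl (m, -l)) := pr (m, -l) '' perDiag m l lam

/-- `λ ∈ P_{m,ℓ}`: an `ℓ`-restricted generalized partition of length `m`
(only the values `λ_1, …, λ_m` are relevant). -/
def IsRestricted (m l : ℤ) (lam : ℤ → ℤ) : Prop :=
  (∀ a : ℤ, 1 ≤ a → a < m → lam (a + 1) ≤ lam a) ∧ lam 1 - lam m ≤ l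

/-- `y` is a `D`-active cell (with ambient diagram `Θ`). -/
def IsActive (Θ D : Set Cell) (y : Cell) : Prop :=
  y ∈ D ∧ y + (1, 0) ∈ Θ \ D ∧ y + (0, 1) ∈ Θ \ D ∧ y + (1, 1) ∈ Θ \ D

/-- One elementary excitation inside `Θ`. -/
def exciteStep (Θ D E : Set Cell) : Prop :=
  ∃ y, IsActive Θ D y ∧ E = (D \ {y}) ∪ {y + (1, 1)}

/-- The excited diagrams of `M` in `Θ`. -/
def ExcitedSet (Θ M : Set Cell) : Set (Set Cell) :=
  {D | Relation.ReflTransGen (exciteStep Θ) M D}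

/-- One periodic elementary excitation inside `Θ`. -/
def pExciteStep (ω : Cell) (Θ D E : Set Cell) : Prop :=
  ∃ y, IsActive Θ D y ∧ E = (D \ zline ω y) ∪ zline ω (y + (1, 1))

/-- The periodic excited diagrams of `M` in `Θ`. -/
def PExcitedSet (ω : Cell) (Θ M : Set Cell) : Set (Set Cell) :=
  {D | Relation.ReflTransGen (pExciteStep ω Θ) M D}

/-- The cylindric excited diagrams: images under `π` of the periodic excited diagrams. -/
def CylExcitedSet (ω : Cell) (Θ M : Set Cell) : Set (Set (Cyl ω)) :=
  (fun D => pr ω '' D) '' PExcitedSet ω Θ M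

/-- A linear extension of `S` (with respect to a relation `R`): a bijection
`ε : S → {1,…,n}` with `ε x < ε y` whenever `R x y` and `x ≠ y`. -/
def IsLinExt {α : Type} (R : α → α → Prop) (S : Set α) (n : ℕ) (ε : S → Fin n) : Prop :=
  Function.Bijective ε ∧ ∀ x y : S, R (x : α) (y : α) → (x : α) ≠ (y : α) → ε x < ε y

/-- The number of linear extensions of `S`. -/
noncomputable def linExtCount {α : Type} (R : α → α → Prop) (S : Set α) (n : ℕ) : ℕ :=
  Nat.card {ε : S → Fin n // IsLinExt R S n ε}

/-- A reverse standard tableau on a (skew) diagram `S` of `n` cells. -/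
def IsRST (S : Set Cell) (n : ℕ) (ε : S → Fin n) : Prop :=
  Function.Bijective ε ∧
    (∀ x y : S, (y : Cell) = (x : Cell) + (0, 1) → ε y < ε x) ∧
    (∀ x y : S, (y : Cell) = (x : Cell) + (1, 0) → ε y < ε x)

/-- An `ℓ`-restricted reverse standard tableau on a skew diagram of length `m`. -/
def IsRSTl (m l : ℤ) (S : Set Cell) (n : ℕ) (ε : S → Fin n) : Prop :=
  IsRST S n ε ∧
    ∀ x y : S, (x : Cell).1 = 1 → (y : Cell) = (m, (x : Cell).2 - l) → ε x < ε y

/-- One lattice step: right by `(1,0)` or down by `(0,−1)`. -/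
def stepRel (a b : Cell) : Prop := b - a = (1, 0) ∨ b - a = (0, -1)

/-- `p` is (the list of cells of) a lattice path from `u` to `v`. -/
def IsLatticePathList (u v : Cell) (p : List Cell) : Prop :=
  p.head? = some u ∧ p.getLast? = some v ∧ p.Chain' stepRel

/-- `L(u,v)`: lattice paths from `u` to `v`, identified with their underlying sets of cells. -/
def LPath (u v : Cell) : Set (Set Cell) :=
  {S | ∃ p : List Cell, IsLatticePathList u v p ∧ S = {x | x ∈ p}}

/-- `L_Θ(u,v)`: lattice paths from `u` to `v` contained in `Θ`. -/
def LPathIn (Θ : Set Cell) (u v : Cell) : Set (Set Cell) := {S | S ∈ LPath u v ∧ S ⊆ Θ}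

/-- One lattice step on the cylinder. -/
def cylStep (ω : Cell) (x y : Cyl ω) : Prop :=
  ∃ u v : Cell, pr ω u = x ∧ pr ω v = y ∧ stepRel u v

/-- `S` is a non-intersecting loop of length `n` in the cylinder. -/
def IsNILoop (ω : Cell) (n : ℕ) (S : Set (Cyl ω)) : Prop :=
  ∃ u : ZMod n → Cyl ω, Function.Injective u ∧ S = Set.range u ∧
    ∀ i : ZMod n, cylStep ω (u i) (u (i + 1))

/-- `h^{s,t}_{m,ℓ}(x) = ℓ+m−a−b+dt+s+1` where `x = (a, b−dℓ)` with `2 ≤ b ≤ ℓ+1`, `d ≥ 0`. -/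
def hst (m l s t : ℤ) (x : Cell) : ℤ :=
  l + m - x.1 - x.2 + ((l + 1 - x.2) / l) * (t - l) + s + 1

/-- The hook lengths `h_i` of the bar case: `h_{ℓt+j} = (ℓ+1)t+j = i + (i−1)/ℓ`. -/
def hbar (l i : ℤ) : ℤ := i + (i - 1) / l

namespace Cor75

variable {l m : ℤ}

lemma smul_om (l m k : ℤ) : k • ((m, -l) : Cell) = (k*m, -(k*l)) := by
  ext <;> simp [mul_comm]

/-- strip membership -/
def Strip (m : ℤ) : Set Cell := {x | 1 ≤ x.1 ∧ x.1 ≤ m}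

lemma strip_unique (hm : 1 ≤ m) {x y : Cell} {k : ℤ}
    (hx : x ∈ Strip m) (hy : y ∈ Strip m) (h : y = x + k • ((m, -l) : Cell)) :
    y = x ∧ k = 0 := by
  rw [smul_om] at h
  obtain ⟨hx1, hx2⟩ := hx
  obtain ⟨hy1, hy2⟩ := hy
  have h1 : y.1 = x.1 + k * m := by rw [h]; rfl
  have h2 : y.2 = x.2 + -(k * l) := by rw [h]; rfl
  have hk : k = 0 := by
    rcases lt_trichotomy k 0 with h' | h' | h'
    · nlinarith
    · exact h'
    · nlinarith
  subst hk
  simp at h1 h2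
  exact ⟨Prod.ext h1 (by omega), rfl⟩

lemma mem_perClosure {S : Set Cell} {x : Cell} {ω : Cell} :
    x ∈ perClosure ω S ↔ ∃ y ∈ S, ∃ k : ℤ, x = y + k • ω := Iff.rfl

lemma subset_perClosure {S : Set Cell} {ω : Cell} : S ⊆ perClosure ω S :=
  fun x hx => ⟨x, hx, 0, by simp⟩

lemma perClosure_mono {S T : Set Cell} {ω : Cell} (h : S ⊆ T) :
    perClosure ω S ⊆ perClosure ω T := by
  rintro x ⟨y, hy, k, rfl⟩; exact ⟨y, h hy, k, rfl⟩

lemma perClosure_union {S T : Set Cell} {ω : Cell} :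
    perClosure ω (S ∪ T) = perClosure ω S ∪ perClosure ω T := by
  ext x
  constructor
  · rintro ⟨y, hy | hy, k, rfl⟩
    · exact Or.inl ⟨y, hy, k, rfl⟩
    · exact Or.inr ⟨y, hy, k, rfl⟩
  · rintro (⟨y, hy, k, rfl⟩ | ⟨y, hy, k, rfl⟩)
    · exact ⟨y, Or.inl hy, k, rfl⟩
    · exact ⟨y, Or.inr hy, k, rfl⟩

lemma perClosure_single {c : Cell} {ω : Cell} : perClosure ω {c} = zline ω c := by
  ext x
  constructor
  · rintro ⟨y, rfl, k, rfl⟩; exact ⟨k, rfl⟩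
  · rintro ⟨k, rfl⟩; exact ⟨c, rfl, k, rfl⟩

lemma perClosure_shift {S : Set Cell} {ω : Cell} {x : Cell} (k : ℤ)
    (hx : x ∈ perClosure ω S) : x + k • ω ∈ perClosure ω S := by
  obtain ⟨y, hy, k', rfl⟩ := hx
  exact ⟨y, hy, k' + k, by rw [add_smul, add_assoc]⟩

lemma zline_shift {ω c : Cell} (k : ℤ) : zline ω (c + k • ω) = zline ω c := by
  ext x
  constructor
  · rintro ⟨k', rfl⟩; exact ⟨k + k', by rw [add_smul, add_assoc]⟩
  · rintro ⟨k', rfl⟩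
    exact ⟨k' - k, by rw [sub_smul, add_assoc]; ring_nf⟩

lemma perClosure_diff (hm : 1 ≤ m) {A B : Set Cell}
    (hA : A ⊆ Strip m) (hB : B ⊆ Strip m) :
    perClosure ((m, -l) : Cell) A \ perClosure ((m, -l) : Cell) B
      = perClosure ((m, -l) : Cell) (A \ B) := by
  ext x
  constructor
  · rintro ⟨⟨y, hy, k, rfl⟩, hnb⟩
    refine ⟨y, ⟨hy, fun hyB => hnb ⟨y, hyB, k, rfl⟩⟩, k, rfl⟩
  · rintro ⟨y, ⟨hyA, hyB⟩, k, rfl⟩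
    refine ⟨⟨y, hyA, k, rfl⟩, ?_⟩
    rintro ⟨z, hz, k', hz'⟩
    -- y + k • ω = z + k' • ω, so y = z + (k'-k) • ω
    have : y = z + (k' - k) • ((m, -l) : Cell) := by
      have := hz'
      rw [sub_smul]
      have : y + k • ((m, -l) : Cell) - k • ((m, -l) : Cell)
          = z + k' • ((m, -l) : Cell) - k • ((m, -l) : Cell) := by rw [hz']
      simpa [add_sub_assoc] using this
    obtain ⟨rfl, -⟩ := strip_unique (l := l) hm (hB hz) (hA hyA) this
    exact hyB hz

lemma perClosure_diff_single (hm : 1 ≤ m) {A : Set Cell} {c : Cell}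
    (hA : A ⊆ Strip m) (hc : c ∈ Strip m) :
    perClosure ((m, -l) : Cell) (A \ {c})
      = perClosure ((m, -l) : Cell) A \ zline ((m, -l) : Cell) c := by
  rw [← perClosure_single, ← perClosure_diff hm hA (by simpa using hc)]

lemma pr_eq_iff {ω u v : Cell} : pr ω u = pr ω v ↔ ∃ k : ℤ, v = u + k • ω := by
  unfold pr
  rw [QuotientAddGroup.eq]
  constructor
  · rintro h
    rw [AddSubgroup.mem_zmultiples_iff] at h
    obtain ⟨k, hk⟩ := h
    exact ⟨k, by rw [hk]; abel⟩
  · rintro ⟨k, rfl⟩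
    rw [AddSubgroup.mem_zmultiples_iff]
    exact ⟨k, by abel⟩

lemma pr_image_perClosure {S : Set Cell} {ω : Cell} :
    pr ω '' perClosure ω S = pr ω '' S := by
  apply Set.Subset.antisymm
  · rintro x ⟨y, ⟨z, hz, k, rfl⟩, rfl⟩
    exact ⟨z, hz, by rw [pr_eq_iff]; exact ⟨k, rfl⟩⟩
  · exact Set.image_mono subset_perClosure

lemma pr_image_diff {A B : Set Cell} {ω : Cell}
    (hB : ∀ x ∈ B, ∀ k : ℤ, x + k • ω ∈ B) :
    pr ω '' (A \ B) = pr ω '' A \ pr ω '' B := by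
  apply Set.Subset.antisymm
  · rintro x ⟨y, ⟨hyA, hyB⟩, rfl⟩
    refine ⟨⟨y, hyA, rfl⟩, ?_⟩
    rintro ⟨z, hz, hz'⟩
    rw [pr_eq_iff] at hz'
    obtain ⟨k, rfl⟩ := hz'
    exact hyB (hB z hz k)
  · rintro x ⟨⟨y, hyA, rfl⟩, hnb⟩
    exact ⟨y, ⟨hyA, fun hyB => hnb ⟨y, hyB, rfl⟩⟩, rfl⟩

end Cor75
namespace Cor75

lemma stepRel_right {u : Cell} : stepRel u (u + (1,0)) := Or.inl (by simp [stepRel])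
lemma stepRel_down {u : Cell} : stepRel u (u + (0,-1)) := Or.inr (by simp [stepRel])

lemma stepRel_cases {u w : Cell} (h : stepRel u w) : w = u + (1,0) ∨ w = u + (0,-1) := by
  rcases h with h | h
  · left; have : w = u + (1,0) := by rw [← h]; abel
    exact this
  · right; have : w = u + (0,-1) := by rw [← h]; abel
    exact this

/-- Forward: any lattice path list is a staircase set. -/
lemma path_stair : ∀ (p : List Cell) (u v : Cell), IsLatticePathList u v p →
    ∃ d : ℤ → ℤ, u.1 ≤ v.1 ∧ d u.1 = u.2 ∧ d (v.1+1) = v.2 ∧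
      (∀ a, u.1 ≤ a → a ≤ v.1 → d (a+1) ≤ d a) ∧
      {x | x ∈ p} = {x : Cell | u.1 ≤ x.1 ∧ x.1 ≤ v.1 ∧ d (x.1+1) ≤ x.2 ∧ x.2 ≤ d x.1}
  | [], u, v, h => by simp [IsLatticePathList] at h
  | [a], u, v, h => by
      obtain ⟨h1, h2, -⟩ := h
      simp only [List.head?_cons, Option.some.injEq] at h1
      simp only [List.getLast?_singleton, Option.some.injEq] at h2
      subst h1; subst h2
      refine ⟨fun _ => a.2, le_refl _, rfl, rfl, fun _ _ _ => le_refl _, ?_⟩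
      ext x
      simp only [List.mem_singleton, Set.mem_setOf_eq]
      constructor
      · rintro rfl; omega
      · rintro ⟨h1, h2, h3, h4⟩
        have hx1 : x.1 = a.1 := by omega
        have hx2 : x.2 = a.2 := by omega
        exact Prod.ext hx1 hx2
  | (a :: b :: rest), u, v, h => by
      obtain ⟨h1, h2, h3⟩ := h
      simp only [List.head?_cons, Option.some.injEq] at h1
      subst h1
      rw [List.getLast?_cons_cons] at h2
      rw [show List.Chain' stepRel (a :: b :: rest) ↔ _ from List.isChain_cons_cons] at h3
      obtain ⟨hstep, hchain⟩ := h3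
      have hbpath : IsLatticePathList b v (b :: rest) := ⟨List.head?_cons, h2, hchain⟩
      obtain ⟨d', hle', hdw', hdv', hmono', hset'⟩ := path_stair (b :: rest) b v hbpath
      rcases stepRel_cases hstep with hbe | hbe
      · -- right step
        have hb1 : b.1 = a.1 + 1 := by rw [hbe]; rfl
        have hb2 : b.2 = a.2 := by rw [hbe]; simp
        rw [hb1] at hle' hdw' hmono' hset'
        rw [hb2] at hdw'
        refine ⟨fun t => if t ≤ a.1 then a.2 else d' t, by omega, by simp, ?_, ?_, ?_⟩
        · simp only []
          rw [if_neg (by omega)]; exact hdv'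
        · intro t ht1 ht2
          simp only []
          rcases lt_trichotomy t a.1 with h | h | h
          · rw [if_pos (by omega), if_pos (by omega)]
          · subst h
            rw [if_pos (le_refl _), if_neg (by omega), hdw']
          · rw [if_neg (by omega), if_neg (by omega)]
            exact hmono' t (by omega) ht2
        · ext x
          have hmem := Set.ext_iff.mp hset' x
          simp only [Set.mem_setOf_eq] at hmem
          rw [Set.mem_setOf_eq, Set.mem_setOf_eq, List.mem_cons, hmem]
          simp only []
          constructor
          · rintro (rfl | ⟨k1, k2, k3, k4⟩)
            · refine ⟨le_refl _, by omega, ?_, ?_⟩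
              · rw [if_neg (by omega), hdw']
              · rw [if_pos (le_refl _)]
            · refine ⟨by omega, k2, ?_, ?_⟩
              · rw [if_neg (by omega)]; exact k3
              · rw [if_neg (by omega)]; exact k4
          · rintro ⟨k1, k2, k3, k4⟩
            rw [if_neg (by omega)] at k3
            by_cases hx : x.1 = a.1
            · rw [if_pos (by omega)] at k4
              rw [hx, hdw'] at k3
              left
              exact Prod.ext hx (by omega)
            · right
              rw [if_neg (by omega)] at k4
              exact ⟨by omega, k2, k3, k4⟩
      · -- down step
        have hb1 : b.1 = a.1 := by rw [hbe]; simp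
        have hb2 : b.2 = a.2 - 1 := by rw [hbe]; simp; ring
        rw [hb1] at hle' hdw' hmono' hset'
        rw [hb2] at hdw'
        refine ⟨fun t => if t = a.1 then a.2 else d' t, hle', by simp, ?_, ?_, ?_⟩
        · simp only []
          rw [if_neg (by omega)]; exact hdv'
        · intro t ht1 ht2
          simp only []
          by_cases h : t = a.1
          · rw [if_pos h, if_neg (by omega), h]
            have h2' := hmono' a.1 (by omega) (by omega)
            omega
          · rw [if_neg (by omega), if_neg h]
            exact hmono' t (by omega) ht2
        · ext x
          have hmem := Set.ext_iff.mp hset' x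
          simp only [Set.mem_setOf_eq] at hmem
          rw [Set.mem_setOf_eq, Set.mem_setOf_eq, List.mem_cons, hmem]
          simp only []
          have hstep1 := hmono' a.1 (le_refl _) hle'
          constructor
          · rintro (rfl | ⟨k1, k2, k3, k4⟩)
            · refine ⟨le_refl _, hle', ?_, ?_⟩
              · rw [if_neg (by omega)]; omega
              · rw [if_pos rfl]
            · by_cases hx : x.1 = a.1
              · refine ⟨by omega, k2, ?_, ?_⟩
                · rw [if_neg (by omega)]; exact k3
                · rw [if_pos hx]; rw [hx] at k4; omega
              · refine ⟨k1, k2, ?_, ?_⟩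
                · rw [if_neg (by omega)]; exact k3
                · rw [if_neg hx]; exact k4
          · rintro ⟨k1, k2, k3, k4⟩
            rw [if_neg (by omega)] at k3
            by_cases hx : x.1 = a.1
            · rw [if_pos hx] at k4
              by_cases hx2 : x.2 = a.2
              · left; exact Prod.ext hx hx2
              · right
                refine ⟨by omega, k2, k3, ?_⟩
                rw [hx, hdw']; omega
            · right
              rw [if_neg hx] at k4
              exact ⟨by omega, k2, k3, k4⟩

end Cor75
namespace Cor75

lemma LPath_single (u : Cell) : {x : Cell | x = u} ∈ LPath u u := by
  refine ⟨[u], ⟨List.head?_cons, rfl, List.isChain_singleton u⟩, ?_⟩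
  ext x; simp

lemma LPath_concat {S T : Set Cell} {u v w z : Cell}
    (hS : S ∈ LPath u v) (hT : T ∈ LPath w z) (hstep : stepRel v w) :
    S ∪ T ∈ LPath u z := by
  obtain ⟨p, ⟨hp1, hp2, hp3⟩, rfl⟩ := hS
  obtain ⟨q, ⟨hq1, hq2, hq3⟩, rfl⟩ := hT
  refine ⟨p ++ q, ⟨?_, ?_, ?_⟩, ?_⟩
  · rw [List.head?_append, hp1]; rfl
  · rw [List.getLast?_append, hq2]; rfl
  · rw [show List.Chain' stepRel (p ++ q) ↔ _ from List.isChain_append]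
    refine ⟨hp3, hq3, ?_⟩
    intro x hx y hy
    rw [hp2] at hx
    rw [hq1] at hy
    simp only [Option.mem_def, Option.some.injEq] at hx hy
    subst hx; subst hy; exact hstep
  · ext x; simp [List.mem_append]

lemma LPath_vseg (u : Cell) (n : ℕ) :
    {x : Cell | x.1 = u.1 ∧ u.2 - n ≤ x.2 ∧ x.2 ≤ u.2} ∈ LPath u (u.1, u.2 - n) := by
  induction n with
  | zero =>
      have h := LPath_single u
      have he : {x : Cell | x = u} = {x : Cell | x.1 = u.1 ∧ u.2 - (0:ℕ) ≤ x.2 ∧ x.2 ≤ u.2} := by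
        ext x
        simp only [Set.mem_setOf_eq, Nat.cast_zero]
        constructor
        · rintro rfl; omega
        · rintro ⟨h1, h2, h3⟩; exact Prod.ext h1 (by omega)
      rw [he] at h
      have : ((u.1, u.2 - (0:ℕ)) : Cell) = u := by
        simp
      rw [this]
      exact h
  | succ k ih =>
      have hstep : stepRel ((u.1, u.2 - k) : Cell) ((u.1, u.2 - k) + (0,-1)) := stepRel_down
      have h2 := LPath_concat ih (LPath_single ((u.1, u.2 - k) + (0,-1))) hstep
      have he : {x : Cell | x.1 = u.1 ∧ u.2 - k ≤ x.2 ∧ x.2 ≤ u.2}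
          ∪ {x : Cell | x = (u.1, u.2 - k) + (0,-1)}
          = {x : Cell | x.1 = u.1 ∧ u.2 - (k+1:ℕ) ≤ x.2 ∧ x.2 ≤ u.2} := by
        ext x
        simp only [Set.mem_union, Set.mem_setOf_eq, Prod.ext_iff, Prod.fst_add, Prod.snd_add,
          Nat.cast_add, Nat.cast_one]
        constructor
        · rintro (⟨h1, h2, h3⟩ | ⟨h1, h2⟩)
          · refine ⟨h1, by omega, h3⟩
          · refine ⟨by rw [h1]; simp, ?_, ?_⟩ <;> rw [h2] <;> push_cast <;> omega
        · rintro ⟨h1, h2, h3⟩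
          by_cases hc : x.2 = u.2 - (k+1 : ℤ)
          · right; refine ⟨by rw [h1]; simp, by rw [hc]; push_cast; ring⟩
          · left; refine ⟨h1, by push_cast at h2 ⊢; omega, h3⟩
      have hend : ((u.1, u.2 - k) + ((0:ℤ),(-1:ℤ)) : Cell) = ((u.1, u.2 - (k+1:ℕ)) : Cell) := by
        ext
        · simp
        · push_cast; simp; ring
      rw [he, hend] at h2
      exact h2

/-- Backward: a staircase is a lattice path. -/
lemma stair_path (n : ℕ) : ∀ (d : ℤ → ℤ),
    (∀ a, 1 ≤ a → a ≤ (n:ℤ)+1 → d (a+1) ≤ d a) →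
    {x : Cell | 1 ≤ x.1 ∧ x.1 ≤ (n:ℤ)+1 ∧ d (x.1+1) ≤ x.2 ∧ x.2 ≤ d x.1}
      ∈ LPath ((1 : ℤ), d 1) (((n:ℤ)+1, d ((n:ℤ)+2)) : Cell) := by
  induction n with
  | zero =>
      intro d hmono
      have h := LPath_vseg ((1 : ℤ), d 1) (d 1 - d 2).toNat
      have hd : d 2 ≤ d 1 := hmono 1 le_rfl (by norm_num)
      have he1 : ((1:ℤ), d 1).2 - ((d 1 - d 2).toNat : ℤ) = d 2 := by
        simp only []
        omega
      have he : {x : Cell | x.1 = ((1:ℤ), d 1).1 ∧ ((1:ℤ), d 1).2 - ((d 1 - d 2).toNat : ℤ) ≤ x.2 ∧ x.2 ≤ ((1:ℤ), d 1).2}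
          = {x : Cell | 1 ≤ x.1 ∧ x.1 ≤ (0:ℕ)+1 ∧ d (x.1+1) ≤ x.2 ∧ x.2 ≤ d x.1} := by
        ext x
        simp only [Set.mem_setOf_eq, Nat.cast_zero, zero_add]
        constructor
        · rintro ⟨h1, h2, h3⟩
          refine ⟨by omega, by omega, ?_, ?_⟩
          · rw [show x.1 + 1 = 2 by omega]; omega
          · rw [show x.1 = 1 by omega]; exact h3
        · rintro ⟨h1, h2, h3, h4⟩
          have hx1 : x.1 = 1 := by omega
          rw [hx1] at h3 h4 ⊢
          norm_num at h3
          refine ⟨rfl, by omega, h4⟩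
      rw [he] at h
      have : ((((1:ℤ), d 1).1, ((1:ℤ), d 1).2 - ((d 1 - d 2).toNat : ℤ)) : Cell)
          = (((0:ℕ)+1 : ℤ), d ((0:ℕ)+(2:ℤ))) := by
        ext
        · simp
        · rw [he1]; norm_num
      rw [this] at h
      exact h
  | succ k ih =>
      intro d hmono
      have hstair := ih d (fun a h1 h2 => hmono a h1 (by omega))
      -- concat with right step to column k+2 then vertical segment
      have hd : d ((k:ℤ)+3) ≤ d ((k:ℤ)+2) := by
        have h := hmono ((k:ℤ)+2) (by omega) (by push_cast; omega)
        rw [show (k:ℤ)+2+1 = (k:ℤ)+3 by ring] at h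
        exact h
      have hvseg := LPath_vseg (((k:ℤ)+2, d ((k:ℤ)+2)) : Cell) (d ((k:ℤ)+2) - d ((k:ℤ)+3)).toNat
      have hstep : stepRel (((k:ℤ)+1, d ((k:ℤ)+2)) : Cell) (((k:ℤ)+2, d ((k:ℤ)+2)) : Cell) := by
        left; ext <;> simp
      have h := LPath_concat hstair hvseg hstep
      have hend : ((((k:ℤ)+2, d ((k:ℤ)+2)).1, ((k:ℤ)+2, d ((k:ℤ)+2)).2 - ((d ((k:ℤ)+2) - d ((k:ℤ)+3)).toNat : ℤ)) : Cell)
          = ((((k:ℕ)+1:ℕ):ℤ)+1, d ((((k:ℕ)+1:ℕ):ℤ)+2)) := by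
        ext
        · push_cast; ring
        · simp only []
          push_cast
          rw [show ((k:ℤ)+1+2 : ℤ) = (k:ℤ)+3 by ring]
          omega
      have he : {x : Cell | 1 ≤ x.1 ∧ x.1 ≤ (k:ℤ)+1 ∧ d (x.1+1) ≤ x.2 ∧ x.2 ≤ d x.1}
          ∪ {x : Cell | x.1 = (((k:ℤ)+2, d ((k:ℤ)+2)) : Cell).1 ∧ (((k:ℤ)+2, d ((k:ℤ)+2)) : Cell).2 - ((d ((k:ℤ)+2) - d ((k:ℤ)+3)).toNat : ℤ) ≤ x.2 ∧ x.2 ≤ (((k:ℤ)+2, d ((k:ℤ)+2)) : Cell).2}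
          = {x : Cell | 1 ≤ x.1 ∧ x.1 ≤ ((((k:ℕ)+1:ℕ)):ℤ)+1 ∧ d (x.1+1) ≤ x.2 ∧ x.2 ≤ d x.1} := by
        ext x
        simp only [Set.mem_union, Set.mem_setOf_eq]
        constructor
        · rintro (⟨h1, h2, h3, h4⟩ | ⟨h1, h2, h3⟩)
          · exact ⟨h1, by push_cast; omega, h3, h4⟩
          · refine ⟨by omega, by push_cast; omega, ?_, ?_⟩
            · rw [show x.1 + 1 = (k:ℤ)+3 by omega]; omega
            · rw [show x.1 = (k:ℤ)+2 by omega]; exact h3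
        · rintro ⟨h1, h2, h3, h4⟩
          push_cast at h2
          by_cases hc : x.1 ≤ (k:ℤ)+1
          · left; exact ⟨h1, hc, h3, h4⟩
          · right
            have hx1 : x.1 = (k:ℤ)+2 := by omega
            rw [hx1] at h3 h4
            rw [show (k:ℤ)+2+1 = (k:ℤ)+3 by ring] at h3
            exact ⟨hx1, by omega, h4⟩
      rw [hend, he] at h
      exact h

end Cor75
namespace Cor75

/-- The staircase set of a boundary function `d`. -/
def Pset (m : ℤ) (d : ℤ → ℤ) : Set Cell :=
  {x | 1 ≤ x.1 ∧ x.1 ≤ m ∧ d (x.1+1) ≤ x.2 ∧ x.2 ≤ d x.1}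

/-- `d` is a valid boundary function at level `i`. -/
def Good (l m i : ℤ) (d : ℤ → ℤ) : Prop :=
  d 1 = l+1-i ∧ d (m+1) = 1-i ∧ ∀ a, 1 ≤ a → a ≤ m → d (a+1) ≤ d a

def Lam (l m : ℤ) : Set Cell := perDiag m l (fun _ => l+1)

def Dset (l m : ℤ) (d : ℤ → ℤ) : Set Cell :=
  Lam l m \ perClosure ((m : ℤ), -(l:ℤ)) (Pset m d)

variable {l m : ℤ}

lemma d_mono {i : ℤ} {d : ℤ → ℤ} (hg : Good l m i d) :
    ∀ (n : ℕ) (a : ℤ), 1 ≤ a → a + n ≤ m+1 → d (a + n) ≤ d a := by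
  intro n
  induction n with
  | zero => intro a _ _; norm_num
  | succ k ih =>
      intro a ha1 ha2
      push_cast at ha2 ⊢
      have h1 : d (a + k + 1) ≤ d (a + k) := hg.2.2 (a + k) (by omega) (by omega)
      have h2 : d (a + k) ≤ d a := ih a ha1 (by push_cast; omega)
      calc d (a + (k + 1)) = d (a + k + 1) := by ring_nf
        _ ≤ d (a + k) := h1
        _ ≤ d a := h2

lemma d_mono' {i : ℤ} {d : ℤ → ℤ} (hg : Good l m i d) {a b : ℤ}
    (ha : 1 ≤ a) (hab : a ≤ b) (hb : b ≤ m+1) : d b ≤ d a := by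
  have := d_mono hg (b - a).toNat a ha (by omega)
  rwa [show a + ((b-a).toNat : ℤ) = b by omega] at this

lemma d_le_top {i : ℤ} {d : ℤ → ℤ} (hg : Good l m i d) {a : ℤ}
    (ha : 1 ≤ a) (hb : a ≤ m+1) : d a ≤ l+1-i := by
  have h := d_mono' hg (le_refl 1) ha hb
  rw [hg.1] at h
  exact h

lemma Pset_sub_strip {d : ℤ → ℤ} : Pset m d ⊆ Strip m := fun x hx => ⟨hx.1, hx.2.1⟩

lemma Pset_congr {d d' : ℤ → ℤ} (h : ∀ a, 1 ≤ a → a ≤ m+1 → d a = d' a) :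
    Pset m d = Pset m d' := by
  ext x
  unfold Pset
  constructor
  · rintro ⟨h1, h2, h3, h4⟩
    exact ⟨h1, h2, by rw [← h (x.1+1) (by omega) (by omega)]; exact h3,
      by rw [← h x.1 (by omega) (by omega)]; exact h4⟩
  · rintro ⟨h1, h2, h3, h4⟩
    exact ⟨h1, h2, by rw [h (x.1+1) (by omega) (by omega)]; exact h3,
      by rw [h x.1 (by omega) (by omega)]; exact h4⟩

lemma lowerDiag_lam_eq : lowerDiag m (fun _ => l+1) = {x : Cell | (1 ≤ x.1 ∧ x.1 ≤ m) ∧ x.2 ≤ l+1} := by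
  ext x; exact ⟨fun ⟨a,b,c⟩ => ⟨⟨a,b⟩,c⟩, fun ⟨⟨a,b⟩,c⟩ => ⟨a,b,c⟩⟩

lemma mem_Lam_strip (hm : 1 ≤ m) {x : Cell} (hx : x ∈ Strip m) :
    x ∈ Lam l m ↔ x.2 ≤ l+1 := by
  constructor
  · rintro ⟨y, hy, k, hk⟩
    obtain ⟨rfl, -⟩ := strip_unique (l := l) hm ⟨hy.1, hy.2.1⟩ hx hk
    exact hy.2.2
  · intro h
    exact ⟨x, ⟨hx.1, hx.2, h⟩, 0, by simp⟩

lemma Lam_shift {x : Cell} (k : ℤ) (hx : x ∈ Lam l m) : x + k • ((m:ℤ),-(l:ℤ)) ∈ Lam l m :=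
  perClosure_shift k hx

lemma mem_per_strip (hm : 1 ≤ m) {P : Set Cell} (hP : P ⊆ Strip m) {x : Cell} (hx : x ∈ Strip m) :
    x ∈ perClosure ((m:ℤ),-(l:ℤ)) P ↔ x ∈ P := by
  constructor
  · rintro ⟨y, hy, k, hk⟩
    obtain ⟨rfl, -⟩ := strip_unique (l := l) hm (hP hy) hx hk
    exact hy
  · intro h; exact subset_perClosure h

lemma zline_disj_per (hm : 1 ≤ m) {P : Set Cell} (hP : P ⊆ Strip m) {y : Cell}
    (hy : y ∈ Strip m) (hyP : y ∉ P) :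
    zline ((m:ℤ),-(l:ℤ)) y ∩ perClosure ((m:ℤ),-(l:ℤ)) P = ∅ := by
  ext x
  simp only [Set.mem_inter_iff, Set.mem_empty_iff_false, iff_false]
  rintro ⟨⟨k, rfl⟩, z, hz, k', hk'⟩
  have : y = z + (k' - k) • ((m:ℤ),-(l:ℤ)) := by
    have h1 : y + k • ((m:ℤ),-(l:ℤ)) - k • ((m:ℤ),-(l:ℤ))
        = z + k' • ((m:ℤ),-(l:ℤ)) - k • ((m:ℤ),-(l:ℤ)) := by rw [hk']
    rw [sub_smul]
    simpa [add_sub_assoc] using h1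
  obtain ⟨rfl, -⟩ := strip_unique (l := l) hm (hP hz) hy this
  exact hyP hz

lemma zline_disj (hm : 1 ≤ m) {y y' : Cell} (hy : y ∈ Strip m) (hy' : y' ∈ Strip m)
    (hne : y ≠ y') : zline ((m:ℤ),-(l:ℤ)) y ∩ zline ((m:ℤ),-(l:ℤ)) y' = ∅ := by
  have h := zline_disj_per (l := l) hm (P := {y'})
    (by intro x hx; rw [Set.mem_singleton_iff] at hx; rw [hx]; exact hy') hy
    (by rw [Set.mem_singleton_iff]; exact hne)
  rw [perClosure_single] at h
  exact h

lemma zline_sub_Lam {y : Cell} (hy : y ∈ Lam l m) : zline ((m:ℤ),-(l:ℤ)) y ⊆ Lam l m := by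
  rintro x ⟨k, rfl⟩
  exact Lam_shift k hy

lemma diff_swap {Λ P Zy Zy' : Set Cell}
    (h1 : Zy ∩ P = ∅) (h2 : Zy' ⊆ P) (h3 : P ⊆ Λ) (h4 : Zy ⊆ Λ) (h5 : Zy ∩ Zy' = ∅) :
    Λ \ ((P \ Zy') ∪ Zy) = ((Λ \ P) \ Zy) ∪ Zy' := by
  have e1 : ∀ x, x ∈ Zy → x ∈ P → False := fun x hx hx' => by
    have : x ∈ Zy ∩ P := ⟨hx, hx'⟩
    rw [h1] at this; exact this
  have e5 : ∀ x, x ∈ Zy → x ∈ Zy' → False := fun x hx hx' => by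
    have : x ∈ Zy ∩ Zy' := ⟨hx, hx'⟩
    rw [h5] at this; exact this
  ext x
  simp only [Set.mem_diff, Set.mem_union, Set.mem_diff]
  constructor
  · rintro ⟨hxl, hxn⟩
    by_cases hz' : x ∈ Zy'
    · exact Or.inr hz'
    · left
      refine ⟨⟨hxl, fun hxP => hxn (Or.inl ⟨hxP, hz'⟩)⟩, fun hxZ => hxn (Or.inr hxZ)⟩
  · rintro (⟨⟨hxl, hxP⟩, hxZ⟩ | hz')
    · exact ⟨hxl, fun h => by
        rcases h with ⟨hp, -⟩ | hz
        · exact hxP hp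
        · exact hxZ hz⟩
    · refine ⟨h3 (h2 hz'), ?_⟩
      rintro (⟨hp, hn⟩ | hz)
      · exact hn hz'
      · exact e5 x hz hz'

end Cor75
namespace Cor75

variable {l m : ℤ}

lemma Pset_sub_lower {i : ℤ} {d : ℤ → ℤ} (hi : 0 ≤ i) (hg : Good l m i d) :
    Pset m d ⊆ lowerDiag m (fun _ => l+1) := by
  rintro x ⟨h1, h2, h3, h4⟩
  refine ⟨h1, h2, ?_⟩
  show x.2 ≤ l + 1
  have := d_le_top hg (by omega) (by omega) (a := x.1)
  omega

lemma perP_sub_Lam {i : ℤ} {d : ℤ → ℤ} (hi : 0 ≤ i) (hg : Good l m i d) :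
    perClosure ((m:ℤ),-(l:ℤ)) (Pset m d) ⊆ Lam l m :=
  perClosure_mono (Pset_sub_lower hi hg)

lemma notD_of_per {d : ℤ → ℤ} {x : Cell}
    (h : x ∈ perClosure ((m:ℤ),-(l:ℤ)) (Pset m d)) : x ∉ Dset l m d :=
  fun hD => hD.2 h

lemma flip_step (hl : 1 ≤ l) (hm : 1 ≤ m) {i : ℤ} (hi : 0 ≤ i) {d : ℤ → ℤ}
    (hg : Good l m i d) {j : ℤ} (hj1 : 2 ≤ j) (hj2 : j ≤ m) (hd : d (j+1) < d j) :
    pExciteStep ((m:ℤ),-(l:ℤ)) (Lam l m) (Dset l m d)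
      (Dset l m (fun a => if a = j then d j - 1 else d a))
    ∧ Good l m i (fun a => if a = j then d j - 1 else d a)
    ∧ Dset l m (fun a => if a = j then d j - 1 else d a)
      = (Dset l m d \ zline ((m:ℤ),-(l:ℤ)) ((j-1 : ℤ), d j - 1))
        ∪ zline ((m:ℤ),-(l:ℤ)) (((j-1 : ℤ), d j - 1) + (1,1)) := by
  set d' : ℤ → ℤ := fun a => if a = j then d j - 1 else d a with hd'
  have htop : d j ≤ l+1-i := d_le_top hg (by omega) (by omega)
  have hmono1 : d j ≤ d (j-1) := d_mono' hg (by omega) (by omega) (by omega)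
  -- the active cell
  set y : Cell := ((j-1 : ℤ), d j - 1) with hy
  have hy1 : y.1 = j - 1 := rfl
  have hy2 : y.2 = d j - 1 := rfl
  have hy11 : y + (1,1) = ((j : ℤ), d j) := by ext <;> simp [hy] <;> ring
  have hy10 : y + (1,0) = ((j : ℤ), d j - 1) := by ext <;> simp [hy] <;> ring
  have hy01 : y + (0,1) = ((j-1 : ℤ), d j) := by ext <;> simp [hy] <;> ring
  have hyStrip : y ∈ Strip m := ⟨by rw [hy1]; omega, by rw [hy1]; omega⟩
  have hyLam : y ∈ Lam l m := (mem_Lam_strip hm hyStrip).2 (by rw [hy2]; omega)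
  have hyP : y ∉ Pset m d := by
    rintro ⟨-, -, h3, -⟩
    rw [hy1, hy2, show j - 1 + 1 = j by ring] at h3
    omega
  have hyD : y ∈ Dset l m d :=
    ⟨hyLam, by rw [mem_per_strip hm Pset_sub_strip hyStrip]; exact hyP⟩
  have h10P : ((j : ℤ), d j - 1) ∈ Pset m d :=
    show 1 ≤ j ∧ j ≤ m ∧ d (j+1) ≤ d j - 1 ∧ d j - 1 ≤ d j from
      ⟨by omega, by omega, by omega, by omega⟩
  have h10Lam : ((j : ℤ), d j - 1) ∈ Lam l m :=
    (mem_Lam_strip hm ⟨show (1:ℤ) ≤ j by omega, show j ≤ m by omega⟩).2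
      (show d j - 1 ≤ l + 1 by omega)
  have h01P : ((j-1 : ℤ), d j) ∈ Pset m d :=
    show 1 ≤ j-1 ∧ j-1 ≤ m ∧ d (j-1+1) ≤ d j ∧ d j ≤ d (j-1) from
      ⟨by omega, by omega, by rw [show j - 1 + 1 = j by ring], by omega⟩
  have h01Lam : ((j-1 : ℤ), d j) ∈ Lam l m :=
    (mem_Lam_strip hm ⟨show (1:ℤ) ≤ j - 1 by omega, show j - 1 ≤ m by omega⟩).2
      (show d j ≤ l + 1 by omega)
  have h11P : ((j : ℤ), d j) ∈ Pset m d :=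
    show 1 ≤ j ∧ j ≤ m ∧ d (j+1) ≤ d j ∧ d j ≤ d j from
      ⟨by omega, by omega, by omega, by omega⟩
  have h11Lam : ((j : ℤ), d j) ∈ Lam l m :=
    (mem_Lam_strip hm ⟨show (1:ℤ) ≤ j by omega, show j ≤ m by omega⟩).2
      (show d j ≤ l + 1 by omega)
  have hgood : Good l m i d' := by
    refine ⟨?_, ?_, ?_⟩
    · rw [hd']; simp only [if_neg (by omega : ¬(1:ℤ) = j)]; exact hg.1
    · rw [hd']; simp only [if_neg (by omega : ¬(m+1:ℤ) = j)]; exact hg.2.1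
    · intro a ha1 ha2
      rw [hd']
      simp only []
      by_cases h1 : a + 1 = j
      · rw [if_pos h1, if_neg (by omega), ← h1]
        have := d_mono' hg (a := a) (b := a + 1) (by omega) (by omega) (by omega)
        omega
      · by_cases h2 : a = j
        · rw [if_pos h2, if_neg h1, h2]
          omega
        · rw [if_neg h1, if_neg h2]
          exact hg.2.2 a ha1 ha2
  have hP' : Pset m d' = (Pset m d \ {((j : ℤ), d j)}) ∪ {((j-1 : ℤ), d j - 1)} := by
    ext x
    simp only [Pset, Set.mem_union, Set.mem_diff, Set.mem_singleton_iff, Set.mem_setOf_eq,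
      Prod.ext_iff, hd']
    by_cases h1 : x.1 + 1 = j
    · have h2 : ¬ x.1 = j := by omega
      rw [if_pos h1, if_neg h2, h1]
      constructor
      · rintro ⟨k1, k2, k3, k4⟩
        by_cases hc : x.2 = d j - 1
        · right; exact ⟨by omega, hc⟩
        · left; exact ⟨⟨k1, k2, by omega, k4⟩, by omega⟩
      · rintro (⟨⟨k1, k2, k3, k4⟩, k5⟩ | ⟨k1, k2⟩)
        · exact ⟨k1, k2, by omega, k4⟩
        · refine ⟨by omega, by omega, by omega, ?_⟩
          rw [show x.1 = j - 1 by omega]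
          omega
    · by_cases h2 : x.1 = j
      · rw [if_neg h1, if_pos h2, h2]
        constructor
        · rintro ⟨k1, k2, k3, k4⟩
          left; exact ⟨⟨k1, k2, k3, by omega⟩, by omega⟩
        · rintro (⟨⟨k1, k2, k3, k4⟩, k5⟩ | ⟨k1, k2⟩)
          · exact ⟨k1, k2, k3, by omega⟩
          · omega
      · rw [if_neg h1, if_neg h2]
        constructor
        · rintro ⟨k1, k2, k3, k4⟩
          left; exact ⟨⟨k1, k2, k3, k4⟩, by omega⟩
        · rintro (⟨⟨k1, k2, k3, k4⟩, k5⟩ | ⟨k1, k2⟩)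
          · exact ⟨k1, k2, k3, k4⟩
          · omega
  have hperP' : perClosure ((m:ℤ),-(l:ℤ)) (Pset m d')
      = (perClosure ((m:ℤ),-(l:ℤ)) (Pset m d) \ zline ((m:ℤ),-(l:ℤ)) ((j : ℤ), d j))
        ∪ zline ((m:ℤ),-(l:ℤ)) y := by
    rw [hP', perClosure_union, perClosure_single,
      perClosure_diff_single hm Pset_sub_strip ⟨by omega, by omega⟩]
  have hEeq : Dset l m d' = (Dset l m d \ zline ((m:ℤ),-(l:ℤ)) y)
      ∪ zline ((m:ℤ),-(l:ℤ)) (y + (1,1)) := by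
    rw [hy11]
    show Lam l m \ _ = _
    rw [hperP']
    exact diff_swap
      (zline_disj_per hm Pset_sub_strip hyStrip hyP)
      (by rintro x ⟨k, rfl⟩; exact perClosure_shift k (subset_perClosure h11P))
      (perP_sub_Lam hi hg)
      (zline_sub_Lam hyLam)
      (zline_disj hm hyStrip ⟨show (1:ℤ) ≤ j by omega, show j ≤ m by omega⟩
        (by intro h
            rw [Prod.ext_iff] at h
            have h1' : (j:ℤ) - 1 = j := h.1
            omega))
  refine ⟨⟨y, ⟨hyD, ?_, ?_, ?_⟩, hEeq⟩, hgood, hEeq⟩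
  · rw [hy10]
    exact ⟨h10Lam, notD_of_per (subset_perClosure h10P)⟩
  · rw [hy01]
    exact ⟨h01Lam, notD_of_per (subset_perClosure h01P)⟩
  · rw [hy11]
    exact ⟨h11Lam, notD_of_per (subset_perClosure h11P)⟩

end Cor75
namespace Cor75

variable {l m : ℤ}

lemma bump_step (hl : 1 ≤ l) (hm : 1 ≤ m) {i : ℤ} (hi : 0 ≤ i) {d : ℤ → ℤ}
    (hg : Good l m i d) (hb : d 2 ≤ l - i) :
    pExciteStep ((m:ℤ),-(l:ℤ)) (Lam l m) (Dset l m d)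
      (Dset l m (fun a => if a = 1 then l - i else if a = m+1 then -i else d a))
    ∧ Good l m (i+1) (fun a => if a = 1 then l - i else if a = m+1 then -i else d a)
    ∧ Dset l m (fun a => if a = 1 then l - i else if a = m+1 then -i else d a)
      = (Dset l m d \ zline ((m:ℤ),-(l:ℤ)) ((m : ℤ), -i))
        ∪ zline ((m:ℤ),-(l:ℤ)) (((m : ℤ), -i) + (1,1)) := by
  set d'' : ℤ → ℤ := fun a => if a = 1 then l - i else if a = m+1 then -i else d a with hd''
  have hdm : d (m+1) ≤ d m := hg.2.2 m (by omega) (by omega)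
  have hgm : d (m+1) = 1 - i := hg.2.1
  have hg1 : d 1 = l + 1 - i := hg.1
  set y : Cell := ((m : ℤ), -i) with hy
  have hy11 : y + (1,1) = ((m+1 : ℤ), 1-i) := by ext <;> simp [hy] <;> ring
  have hy10 : y + (1,0) = ((m+1 : ℤ), -i) := by ext <;> simp [hy] <;> ring
  have hy01 : y + (0,1) = ((m : ℤ), 1-i) := by ext <;> simp [hy] <;> ring
  have hsh1 : ((1 : ℤ), l-i) + (1:ℤ) • ((m:ℤ),-(l:ℤ)) = ((m+1 : ℤ), -i) := by
    rw [one_smul]; ext <;> simp <;> ring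
  have hsh2 : ((1 : ℤ), l+1-i) + (1:ℤ) • ((m:ℤ),-(l:ℤ)) = ((m+1 : ℤ), 1-i) := by
    rw [one_smul]; ext <;> simp <;> ring
  have hyStrip : y ∈ Strip m := ⟨show (1:ℤ) ≤ m from hm, le_refl m⟩
  have hyLam : y ∈ Lam l m := (mem_Lam_strip hm hyStrip).2 (show -i ≤ l+1 by omega)
  have hyP : y ∉ Pset m d := by
    rintro ⟨-, -, h3, -⟩
    have h3' : d (m+1) ≤ -i := h3
    omega
  have hyD : y ∈ Dset l m d :=
    ⟨hyLam, by rw [mem_per_strip hm Pset_sub_strip hyStrip]; exact hyP⟩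
  have h1P : ((1 : ℤ), l-i) ∈ Pset m d :=
    show 1 ≤ (1:ℤ) ∧ 1 ≤ m ∧ d (1+1) ≤ l-i ∧ l-i ≤ d 1 from
      ⟨le_refl _, hm, by rw [show (1:ℤ)+1 = 2 by norm_num]; exact hb, by omega⟩
  have h1Lam : ((1 : ℤ), l-i) ∈ Lam l m :=
    (mem_Lam_strip hm ⟨le_refl _, hm⟩).2 (show l-i ≤ l+1 by omega)
  have h10Lam : ((m+1 : ℤ), -i) ∈ Lam l m := by
    rw [← hsh1]; exact Lam_shift 1 h1Lam
  have h10per : ((m+1 : ℤ), -i) ∈ perClosure ((m:ℤ),-(l:ℤ)) (Pset m d) := by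
    rw [← hsh1]; exact perClosure_shift 1 (subset_perClosure h1P)
  have h01P : ((m : ℤ), 1-i) ∈ Pset m d :=
    show 1 ≤ m ∧ m ≤ m ∧ d (m+1) ≤ 1-i ∧ 1-i ≤ d m from
      ⟨hm, le_refl _, by omega, by omega⟩
  have h01Lam : ((m : ℤ), 1-i) ∈ Lam l m :=
    (mem_Lam_strip hm ⟨hm, le_refl _⟩).2 (show 1-i ≤ l+1 by omega)
  have htopP : ((1 : ℤ), l+1-i) ∈ Pset m d :=
    show 1 ≤ (1:ℤ) ∧ 1 ≤ m ∧ d (1+1) ≤ l+1-i ∧ l+1-i ≤ d 1 from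
      ⟨le_refl _, hm, by rw [show (1:ℤ)+1 = 2 by norm_num]; omega, by omega⟩
  have h11Lam : ((m+1 : ℤ), 1-i) ∈ Lam l m := by
    rw [← hsh2]
    exact Lam_shift 1 ((mem_Lam_strip hm ⟨le_refl _, hm⟩).2 (show l+1-i ≤ l+1 by omega))
  have h11per : ((m+1 : ℤ), 1-i) ∈ perClosure ((m:ℤ),-(l:ℤ)) (Pset m d) := by
    rw [← hsh2]; exact perClosure_shift 1 (subset_perClosure htopP)
  have hgood : Good l m (i+1) d'' := by
    refine ⟨?_, ?_, ?_⟩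
    · show (if (1:ℤ) = 1 then l - i else if (1:ℤ) = m+1 then -i else d 1) = l+1-(i+1)
      rw [if_pos rfl]; ring
    · show (if (m+1:ℤ) = 1 then l - i else if (m+1:ℤ) = m+1 then -i else d (m+1)) = 1-(i+1)
      rw [if_neg (by omega), if_pos rfl]; ring
    · intro a ha1 ha2
      show (if a+1 = 1 then l - i else if a+1 = m+1 then -i else d (a+1))
          ≤ (if a = 1 then l - i else if a = m+1 then -i else d a)
      rw [if_neg (show ¬a+1 = 1 by omega), if_neg (show ¬a = m+1 by omega)]
      by_cases h1 : a + 1 = m + 1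
      · rw [if_pos h1]
        by_cases h2 : a = 1
        · rw [if_pos h2]; omega
        · rw [if_neg h2]
          have : d (m+1) ≤ d a := d_mono' hg (by omega) (by omega) (le_refl _)
          omega
      · rw [if_neg h1]
        by_cases h2 : a = 1
        · rw [if_pos h2, h2]
          rw [show (1:ℤ)+1 = 2 by norm_num]
          exact hb
        · rw [if_neg h2]
          exact hg.2.2 a ha1 ha2
  have hP'' : Pset m d'' = (Pset m d \ {((1 : ℤ), l+1-i)}) ∪ {((m : ℤ), -i)} := by
    ext x
    simp only [Pset, Set.mem_union, Set.mem_diff, Set.mem_singleton_iff, Set.mem_setOf_eq,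
      Prod.ext_iff]
    have hBne : ¬ (x.1 + 1 = 1) ∨ True := Or.inr trivial
    by_cases hx1 : x.1 = 1
    · by_cases hxm : x.1 = m
      · -- m = 1 column
        have hm1 : m = 1 := by omega
        have hA : d'' x.1 = l - i := by rw [hx1]; show (if (1:ℤ) = 1 then l - i else _) = l - i; rw [if_pos rfl]
        have hB : d'' (x.1+1) = -i := by
          rw [hx1]
          show (if (1:ℤ)+1 = 1 then l - i else if (1:ℤ)+1 = m+1 then -i else d 2) = -i
          rw [if_neg (by omega), if_pos (by omega)]
        have hC : d x.1 = l+1-i := by rw [hx1]; exact hg1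
        have hD : d (x.1+1) = 1-i := by
          rw [hx1, show (1:ℤ)+1 = m+1 by omega]; exact hgm
        omega
      · have hA : d'' x.1 = l - i := by rw [hx1]; show (if (1:ℤ) = 1 then l - i else _) = l - i; rw [if_pos rfl]
        have hB : d'' (x.1+1) = d (x.1+1) := by
          rw [hx1]
          show (if (1:ℤ)+1 = 1 then l - i else if (1:ℤ)+1 = m+1 then -i else d ((1:ℤ)+1)) = d ((1:ℤ)+1)
          rw [if_neg (by omega), if_neg (by omega)]
        have hC : d x.1 = l+1-i := by rw [hx1]; exact hg1
        omega
    · by_cases hxm : x.1 = m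
      · have hA : d'' x.1 = d x.1 := by
          show (if x.1 = 1 then l - i else if x.1 = m+1 then -i else d x.1) = d x.1
          rw [if_neg hx1, if_neg (by omega)]
        have hB : d'' (x.1+1) = -i := by
          show (if x.1+1 = 1 then l - i else if x.1+1 = m+1 then -i else d (x.1+1)) = -i
          rw [if_neg (by omega), if_pos (by omega)]
        have hD : d (x.1+1) = 1-i := by rw [hxm]; exact hgm
        have hE : 1-i ≤ d x.1 ∨ x.1 < 1 := by
          by_cases hr : 1 ≤ x.1
          · left; rw [hxm]; omega
          · right; omega
        omega
      · have hAB : (d'' x.1 = d x.1 ∧ d'' (x.1+1) = d (x.1+1)) ∨ x.1 > m ∨ x.1 < 1 := by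
          by_cases hr : 1 ≤ x.1 ∧ x.1 ≤ m
          · left
            constructor
            · show (if x.1 = 1 then l - i else if x.1 = m+1 then -i else d x.1) = d x.1
              rw [if_neg hx1, if_neg (by omega)]
            · show (if x.1+1 = 1 then l - i else if x.1+1 = m+1 then -i else d (x.1+1)) = d (x.1+1)
              rw [if_neg (by omega), if_neg (by omega)]
          · right; omega
        omega
  have hzl : zline ((m:ℤ),-(l:ℤ)) ((m+1 : ℤ), 1-i) = zline ((m:ℤ),-(l:ℤ)) ((1 : ℤ), l+1-i) := by
    rw [← hsh2, zline_shift]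
  have hperP'' : perClosure ((m:ℤ),-(l:ℤ)) (Pset m d'')
      = (perClosure ((m:ℤ),-(l:ℤ)) (Pset m d) \ zline ((m:ℤ),-(l:ℤ)) ((1 : ℤ), l+1-i))
        ∪ zline ((m:ℤ),-(l:ℤ)) y := by
    rw [hP'', perClosure_union, perClosure_single,
      perClosure_diff_single hm Pset_sub_strip ⟨le_refl _, hm⟩]
  have hEeq : Dset l m d'' = (Dset l m d \ zline ((m:ℤ),-(l:ℤ)) y)
      ∪ zline ((m:ℤ),-(l:ℤ)) (y + (1,1)) := by
    rw [hy11, hzl]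
    show Lam l m \ _ = _
    rw [hperP'']
    exact diff_swap
      (zline_disj_per hm Pset_sub_strip hyStrip hyP)
      (by rintro x ⟨k, rfl⟩; exact perClosure_shift k (subset_perClosure htopP))
      (perP_sub_Lam hi hg)
      (zline_sub_Lam hyLam)
      (zline_disj hm hyStrip ⟨le_refl _, hm⟩
        (by intro h
            rw [Prod.ext_iff] at h
            have h1' : (m:ℤ) = 1 := h.1
            have h2' : -i = l+1-i := h.2
            omega))
  refine ⟨⟨y, ⟨hyD, ?_, ?_, ?_⟩, hEeq⟩, hgood, hEeq⟩
  · rw [hy10]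
    exact ⟨h10Lam, notD_of_per h10per⟩
  · rw [hy01]
    exact ⟨h01Lam, notD_of_per (subset_perClosure h01P)⟩
  · rw [hy11]
    exact ⟨h11Lam, notD_of_per h11per⟩

end Cor75
namespace Cor75

variable {l m : ℤ}

lemma exists_strip_rep (hm : 1 ≤ m) (x : Cell) :
    ∃ k : ℤ, x + k • ((m:ℤ),-(l:ℤ)) ∈ Strip m := by
  refine ⟨-((x.1 - 1) / m), ?_, ?_⟩
  all_goals
    have hc : (x + (-((x.1 - 1) / m)) • ((m:ℤ),-(l:ℤ))).1 = x.1 + -((x.1 - 1) / m) * m := by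
      rw [smul_om]; rfl
    rw [hc]
    have h1 := Int.emod_nonneg (x.1 - 1) (show m ≠ 0 by omega)
    have h2 := Int.emod_lt_of_pos (x.1 - 1) (show 0 < m by omega)
    have h3 := Int.mul_ediv_add_emod (x.1 - 1) m
    nlinarith [h3]

lemma shift_cancel (x : Cell) (k : ℤ) (ω : Cell) : x + k • ω + (-k) • ω = x := by
  rw [neg_smul, add_assoc, add_neg_cancel, add_zero]

lemma Dset_shift {d : ℤ → ℤ} {x : Cell} (k : ℤ) (hx : x ∈ Dset l m d) :
    x + k • ((m:ℤ),-(l:ℤ)) ∈ Dset l m d := by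
  refine ⟨Lam_shift k hx.1, fun h => hx.2 ?_⟩
  have := perClosure_shift (-k) h
  rwa [shift_cancel] at this

lemma active_shift {d : ℤ → ℤ} {y : Cell} (k : ℤ)
    (h : IsActive (Lam l m) (Dset l m d) y) :
    IsActive (Lam l m) (Dset l m d) (y + k • ((m:ℤ),-(l:ℤ))) := by
  obtain ⟨h0, h1, h2, h3⟩ := h
  have key : ∀ c : Cell, c ∈ Lam l m \ Dset l m d →
      c + k • ((m:ℤ),-(l:ℤ)) ∈ Lam l m \ Dset l m d := by
    rintro c ⟨hc1, hc2⟩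
    refine ⟨Lam_shift k hc1, fun h => hc2 ?_⟩
    have := Dset_shift (-k) h
    rwa [shift_cancel] at this
  have comm : ∀ w : Cell, y + k • ((m:ℤ),-(l:ℤ)) + w = (y + w) + k • ((m:ℤ),-(l:ℤ)) := by
    intro w; abel
  refine ⟨Dset_shift k h0, ?_, ?_, ?_⟩
  · rw [comm]; exact key _ h1
  · rw [comm]; exact key _ h2
  · rw [comm]; exact key _ h3

lemma mem_perP_of_diff {d : ℤ → ℤ} {x : Cell} (h : x ∈ Lam l m \ Dset l m d) :
    x ∈ perClosure ((m:ℤ),-(l:ℤ)) (Pset m d) := by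
  by_contra hc
  exact h.2 ⟨h.1, hc⟩

lemma classify (hl : 1 ≤ l) (hm : 1 ≤ m) {i : ℤ} (hi : 0 ≤ i) {d : ℤ → ℤ}
    (hg : Good l m i d) {E : Set Cell}
    (h : pExciteStep ((m:ℤ),-(l:ℤ)) (Lam l m) (Dset l m d) E) :
    ∃ i' : ℤ, 0 ≤ i' ∧ ∃ d' : ℤ → ℤ, Good l m i' d' ∧ E = Dset l m d' := by
  obtain ⟨y0, hact0, hEeq0⟩ := h
  obtain ⟨k, hk⟩ := exists_strip_rep (l := l) hm y0
  set y : Cell := y0 + k • ((m:ℤ),-(l:ℤ)) with hydef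
  have hact : IsActive (Lam l m) (Dset l m d) y := active_shift k hact0
  have hz1 : zline ((m:ℤ),-(l:ℤ)) y0 = zline ((m:ℤ),-(l:ℤ)) y := (zline_shift k).symm
  have hz2 : zline ((m:ℤ),-(l:ℤ)) (y0 + (1,1)) = zline ((m:ℤ),-(l:ℤ)) (y + (1,1)) := by
    have : y + (1,1) = (y0 + (1,1)) + k • ((m:ℤ),-(l:ℤ)) := by rw [hydef]; abel
    rw [this, zline_shift]
  have hEeq : E = (Dset l m d \ zline ((m:ℤ),-(l:ℤ)) y)
      ∪ zline ((m:ℤ),-(l:ℤ)) (y + (1,1)) := by rw [hEeq0, hz1, hz2]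
  obtain ⟨hyD, h10, h01, h11⟩ := hact
  have hyStrip : y ∈ Strip m := hk
  have hs1 : 1 ≤ y.1 := hyStrip.1
  have hs2 : y.1 ≤ m := hyStrip.2
  have hyP : y ∉ Pset m d := by
    intro hP
    exact hyD.2 (subset_perClosure hP)
  by_cases hc : y.1 = m
  · -- bump case
    have e10 : y + ((1:ℤ),(0:ℤ)) = ((1 : ℤ), y.2 + l) + (1:ℤ) • ((m:ℤ),-(l:ℤ)) := by
      rw [one_smul]; ext <;> simp <;> omega
    have h10P : ((1 : ℤ), y.2 + l) ∈ Pset m d := by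
      have hper := mem_perP_of_diff h10
      rw [e10] at hper
      have := perClosure_shift (-1) hper
      rw [shift_cancel] at this
      rwa [mem_per_strip hm Pset_sub_strip ⟨le_refl _, hm⟩] at this
    have h10P' : d 2 ≤ y.2 + l ∧ y.2 + l ≤ d 1 := by
      obtain ⟨-, -, h3, h4⟩ := h10P
      constructor
      · rw [show (1:ℤ)+1 = 2 by norm_num] at h3; exact h3
      · exact h4
    have e01 : y + ((0:ℤ),(1:ℤ)) = ((m : ℤ), y.2 + 1) := by
      ext <;> simp <;> omega
    have h01P : ((m : ℤ), y.2 + 1) ∈ Pset m d := by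
      have hper := mem_perP_of_diff h01
      rw [e01] at hper
      rwa [mem_per_strip hm Pset_sub_strip ⟨hm, le_refl _⟩] at hper
    have h01P' : d (m+1) ≤ y.2 + 1 ∧ y.2 + 1 ≤ d m := h01P.2.2
    have hyP' : ¬(d (m+1) ≤ y.2 ∧ y.2 ≤ d m) := by
      intro hcc
      apply hyP
      refine ⟨hs1, hs2, ?_, ?_⟩
      · rw [hc]; exact hcc.1
      · rw [hc]; exact hcc.2
    have hy2 : y.2 = -i := by
      have := hg.2.1
      omega
    have hb : d 2 ≤ l - i := by
      have := hg.1
      omega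
    obtain ⟨-, hgood, hE⟩ := bump_step hl hm hi hg hb
    refine ⟨i+1, by omega, _, hgood, ?_⟩
    rw [hEeq, hE]
    have hyeq : ((m : ℤ), -i) = y := by
      ext
      · rw [hc]
      · rw [hy2]
    rw [hyeq]
  · -- flip case
    have hcm : y.1 < m := by omega
    have e10 : y + ((1:ℤ),(0:ℤ)) = ((y.1 + 1 : ℤ), y.2) := by ext <;> simp
    have h10P : ((y.1 + 1 : ℤ), y.2) ∈ Pset m d := by
      have hper := mem_perP_of_diff h10
      rw [e10] at hper
      rwa [mem_per_strip hm Pset_sub_strip ⟨by omega, by omega⟩] at hper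
    have h10P' : d (y.1+1+1) ≤ y.2 ∧ y.2 ≤ d (y.1+1) := h10P.2.2
    have e01 : y + ((0:ℤ),(1:ℤ)) = ((y.1 : ℤ), y.2 + 1) := by ext <;> simp
    have h01P : ((y.1 : ℤ), y.2 + 1) ∈ Pset m d := by
      have hper := mem_perP_of_diff h01
      rw [e01] at hper
      rwa [mem_per_strip hm Pset_sub_strip ⟨by omega, by omega⟩] at hper
    have h01P' : d (y.1+1) ≤ y.2 + 1 ∧ y.2 + 1 ≤ d y.1 := h01P.2.2
    have hyP' : ¬(d (y.1+1) ≤ y.2 ∧ y.2 ≤ d y.1) := by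
      intro hcc
      exact hyP ⟨hs1, hs2, hcc.1, hcc.2⟩
    have hy2 : y.2 = d (y.1+1) - 1 := by omega
    have hd : d (y.1+1+1) < d (y.1+1) := by omega
    obtain ⟨-, hgood, hE⟩ := flip_step hl hm hi hg (j := y.1+1) (by omega) (by omega) hd
    refine ⟨i, hi, _, hgood, ?_⟩
    rw [hEeq, hE]
    have hyeq : ((y.1 + 1 - 1 : ℤ), d (y.1+1) - 1) = y := by
      ext
      · show y.1 + 1 - 1 = y.1; ring
      · show d (y.1+1) - 1 = y.2; omega
    rw [hyeq]

end Cor75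
namespace Cor75

variable {l m : ℤ}

/-- The boundary function of the base staircase (level 0 corner path). -/
def d0 (l m : ℤ) : ℤ → ℤ := fun a => if a = m+1 then 1 else l+1

lemma good_d0 (hl : 1 ≤ l) (hm : 1 ≤ m) : Good l m 0 (d0 l m) := by
  refine ⟨?_, ?_, ?_⟩
  · show (if (1:ℤ) = m+1 then 1 else l+1) = l+1-0
    rw [if_neg (by omega)]; ring
  · show (if (m+1:ℤ) = m+1 then 1 else l+1) = 1-0
    rw [if_pos rfl]; ring
  · intro a ha1 ha2
    show (if a+1 = m+1 then 1 else l+1) ≤ (if a = m+1 then 1 else l+1)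
    rw [if_neg (show ¬ a = m+1 by omega)]
    by_cases h : a + 1 = m+1
    · rw [if_pos h]; omega
    · rw [if_neg h]

lemma Mu_eq (hl : 1 ≤ l) (hm : 1 ≤ m) :
    perDiag m l (fun a => if a = (m:ℤ) then 0 else (l:ℤ)) = Dset l m (d0 l m) := by
  have hsub1 : lowerDiag m (fun _ => l+1) ⊆ Strip m := fun x hx => ⟨hx.1, hx.2.1⟩
  have hkey : lowerDiag m (fun a => if a = (m:ℤ) then 0 else (l:ℤ))
      = lowerDiag m (fun _ => l+1) \ Pset m (d0 l m) := by
    ext x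
    simp only [lowerDiag, Pset, Set.mem_diff, Set.mem_setOf_eq, d0]
    by_cases hxm : x.1 = m
    · rw [hxm]
      rw [if_pos rfl, if_neg (by omega : ¬(m:ℤ) = m+1), if_pos rfl]
      constructor
      · rintro ⟨h1, h2, h3⟩
        exact ⟨⟨h1, h2, by omega⟩, by omega⟩
      · rintro ⟨⟨h1, h2, h3⟩, h4⟩
        exact ⟨h1, h2, by omega⟩
    · rw [if_neg hxm]
      constructor
      · rintro ⟨h1, h2, h3⟩
        refine ⟨⟨h1, h2, by omega⟩, ?_⟩
        rw [if_neg (by omega : ¬ x.1 + 1 = m+1), if_neg (by omega : ¬ x.1 = m+1)]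
        omega
      · rintro ⟨⟨h1, h2, h3⟩, h4⟩
        rw [if_neg (by omega : ¬ x.1 + 1 = m+1), if_neg (by omega : ¬ x.1 = m+1)] at h4
        refine ⟨h1, h2, by omega⟩
  show perClosure _ _ = _
  unfold Dset Lam perDiag
  rw [hkey, ← perClosure_diff hm hsub1 Pset_sub_strip]

/-- The measure used for reachability induction. -/
noncomputable def Nm (l m i : ℤ) (d : ℤ → ℤ) : ℤ :=
  (m+l)*i + ∑ j ∈ Finset.Icc (2:ℤ) m, (l+1-i - d j)

lemma term_nonneg {i : ℤ} {d : ℤ → ℤ} (hg : Good l m i d) {j : ℤ}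
    (hj : j ∈ Finset.Icc (2:ℤ) m) : 0 ≤ l+1-i - d j := by
  rw [Finset.mem_Icc] at hj
  have := d_le_top hg (by omega) (by omega) (a := j)
  omega

lemma sum_nonneg' {i : ℤ} {d : ℤ → ℤ} (hg : Good l m i d) :
    0 ≤ ∑ j ∈ Finset.Icc (2:ℤ) m, (l+1-i - d j) :=
  Finset.sum_nonneg (fun j hj => term_nonneg hg hj)

lemma Nm_nonneg (hl : 1 ≤ l) (hm : 1 ≤ m) {i : ℤ} (hi : 0 ≤ i) {d : ℤ → ℤ}
    (hg : Good l m i d) : 0 ≤ Nm l m i d := by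
  have h1 := sum_nonneg' hg
  have h2 : 0 ≤ (m+l)*i := by positivity
  unfold Nm; omega

lemma Dset_congr {d d' : ℤ → ℤ} (h : ∀ a, 1 ≤ a → a ≤ m+1 → d a = d' a) :
    Dset l m d = Dset l m d' := by
  unfold Dset
  rw [Pset_congr h]

lemma base_flat (hl : 1 ≤ l) (hm : 1 ≤ m) {d : ℤ → ℤ} (hg : Good l m 0 d)
    (hall : ∀ j, 2 ≤ j → j ≤ m → d j = l+1) :
    Dset l m d = Dset l m (d0 l m) := by
  apply Dset_congr
  intro a ha1 ha2
  unfold d0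
  by_cases h : a = m+1
  · rw [if_pos h, h]
    have := hg.2.1
    omega
  · rw [if_neg h]
    by_cases h2 : a = 1
    · rw [h2]
      have := hg.1
      omega
    · exact hall a (by omega) (by omega)

lemma reach (hl : 1 ≤ l) (hm : 1 ≤ m) :
    ∀ (n : ℕ) (i : ℤ), 0 ≤ i → ∀ (d : ℤ → ℤ), Good l m i d → (Nm l m i d).toNat ≤ n →
    Dset l m d ∈ PExcitedSet ((m:ℤ),-(l:ℤ)) (Lam l m) (Dset l m (d0 l m)) := by
  intro n
  induction n with
  | zero =>
      intro i hi d hg hN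
      have hNn := Nm_nonneg hl hm hi hg
      have hN0 : Nm l m i d = 0 := by omega
      have hsum := sum_nonneg' hg
      have hprod : 0 ≤ (m+l)*i := by positivity
      have hi0 : i = 0 := by
        unfold Nm at hN0
        by_contra hne
        have : 1 ≤ i := by omega
        nlinarith
      subst hi0
      have hsum0 : ∑ j ∈ Finset.Icc (2:ℤ) m, (l+1-(0:ℤ) - d j) = 0 := by
        unfold Nm at hN0; omega
      have hterm := (Finset.sum_eq_zero_iff_of_nonneg
        (fun j hj => term_nonneg hg hj)).mp hsum0
      have hall : ∀ j, 2 ≤ j → j ≤ m → d j = l+1 := by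
        intro j h1 h2
        have := hterm j (Finset.mem_Icc.mpr ⟨h1, h2⟩)
        omega
      rw [base_flat hl hm hg hall]
      exact Relation.ReflTransGen.refl
  | succ n ih =>
      intro i hi d hg hN
      by_cases hall : ∀ j, 2 ≤ j → j ≤ m → d j = l+1-i
      · by_cases hi0 : i = 0
        · subst hi0
          rw [base_flat hl hm hg (by intro j h1 h2; have := hall j h1 h2; omega)]
          exact Relation.ReflTransGen.refl
        · -- bump predecessor
          have hi1 : 1 ≤ i := by omega
          set dp : ℤ → ℤ := fun a => if a = 1 then l+2-i else if a = m+1 then 2-i else d a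
            with hdp
          have hgp : Good l m (i-1) dp := by
            refine ⟨?_, ?_, ?_⟩
            · show (if (1:ℤ) = 1 then l+2-i else _) = l+1-(i-1)
              rw [if_pos rfl]; ring
            · show (if (m+1:ℤ) = 1 then l+2-i else if (m+1:ℤ) = m+1 then 2-i else d (m+1)) = 1-(i-1)
              rw [if_neg (by omega), if_pos rfl]; ring
            · intro a ha1 ha2
              show (if a+1 = 1 then l+2-i else if a+1 = m+1 then 2-i else d (a+1))
                  ≤ (if a = 1 then l+2-i else if a = m+1 then 2-i else d a)
              rw [if_neg (show ¬ a+1 = 1 by omega), if_neg (show ¬ a = m+1 by omega)]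
              by_cases h1 : a + 1 = m+1
              · rw [if_pos h1]
                by_cases h2 : a = 1
                · rw [if_pos h2]; omega
                · rw [if_neg h2, hall a (by omega) (by omega)]; omega
              · rw [if_neg h1]
                by_cases h2 : a = 1
                · rw [if_pos h2, hall (a+1) (by omega) (by omega)]; omega
                · rw [if_neg h2]
                  exact hg.2.2 a ha1 ha2
          have hb : dp 2 ≤ l - (i-1) := by
            show (if (2:ℤ) = 1 then l+2-i else if (2:ℤ) = m+1 then 2-i else d 2) ≤ l-(i-1)
            rw [if_neg (by omega)]
            by_cases h1 : (2:ℤ) = m+1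
            · rw [if_pos h1]; omega
            · rw [if_neg h1, hall 2 (by omega) (by omega)]; omega
          obtain ⟨hstep, hgood2, -⟩ := bump_step hl hm (show 0 ≤ i-1 by omega) hgp hb
          have hDeq : Dset l m (fun a => if a = 1 then l - (i-1) else if a = m+1 then -(i-1) else dp a)
              = Dset l m d := by
            apply Dset_congr
            intro a ha1 ha2
            by_cases h1 : a = 1
            · rw [if_pos h1, h1]
              have := hg.1
              omega
            · rw [if_neg h1]
              by_cases h2 : a = m+1
              · rw [if_pos h2, h2]
                have := hg.2.1
                omega
              · rw [if_neg h2, hdp]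
                simp only []
                rw [if_neg h1, if_neg h2]
          -- measure computation
          have hsum0 : ∑ j ∈ Finset.Icc (2:ℤ) m, (l+1-i - d j) = 0 := by
            apply Finset.sum_eq_zero
            intro j hj
            rw [Finset.mem_Icc] at hj
            rw [hall j hj.1 hj.2]; ring
          have hsump : ∑ j ∈ Finset.Icc (2:ℤ) m, (l+1-(i-1) - dp j) = m - 1 := by
            have hc : ∀ j ∈ Finset.Icc (2:ℤ) m, (l+1-(i-1) - dp j) = 1 := by
              intro j hj
              rw [Finset.mem_Icc] at hj
              show l+1-(i-1) - (if j = 1 then l+2-i else if j = m+1 then 2-i else d j) = 1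
              rw [if_neg (by omega), if_neg (by omega), hall j hj.1 hj.2]
              ring
            rw [Finset.sum_congr rfl hc, Finset.sum_const, Int.card_Icc, nsmul_eq_mul]
            omega
          have hNd : Nm l m i d = (m+l)*i := by
            unfold Nm; rw [hsum0]; ring
          have hNp : Nm l m (i-1) dp = (m+l)*i - (l+1) := by
            unfold Nm
            rw [hsump]; ring
          have hNple : (Nm l m (i-1) dp).toNat ≤ n := by
            have h1 : (m+l)*i ≥ l + 1 := by nlinarith
            omega
          have hr := ih (i-1) (by omega) dp hgp hNple
          rw [← hDeq]
          exact Relation.ReflTransGen.tail hr hstep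
      · -- flip predecessor
        push_neg at hall
        set T : Finset ℤ := (Finset.Icc (2:ℤ) m).filter (fun j => d j ≠ l+1-i) with hT
        have hTne : T.Nonempty := by
          obtain ⟨j, h1, h2, h3⟩ := hall
          exact ⟨j, by rw [hT, Finset.mem_filter, Finset.mem_Icc]; exact ⟨⟨h1, h2⟩, h3⟩⟩
        set j := T.min' hTne with hj
        have hjT : j ∈ T := Finset.min'_mem T hTne
        have hjIcc : 2 ≤ j ∧ j ≤ m := by
          have := hjT
          rw [hT, Finset.mem_filter, Finset.mem_Icc] at this
          exact this.1
        have hjne : d j ≠ l+1-i := by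
          have := hjT
          rw [hT, Finset.mem_filter] at this
          exact this.2
        have hjlt : d j < l+1-i := by
          have := d_le_top hg (by omega) (by omega) (a := j)
          omega
        have hprev : d (j-1) = l+1-i := by
          by_cases h1 : j = 2
          · rw [h1]
            norm_num
            have := hg.1
            omega
          · by_contra hne
            have hmem : j - 1 ∈ T := by
              rw [hT, Finset.mem_filter, Finset.mem_Icc]
              exact ⟨⟨by omega, by omega⟩, hne⟩
            have := Finset.min'_le T _ hmem
            omega
        set dp : ℤ → ℤ := fun a => if a = j then d j + 1 else d a with hdp
        have hgp : Good l m i dp := by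
          refine ⟨?_, ?_, ?_⟩
          · show (if (1:ℤ) = j then d j + 1 else d 1) = l+1-i
            rw [if_neg (by omega)]; exact hg.1
          · show (if (m+1:ℤ) = j then d j + 1 else d (m+1)) = 1-i
            rw [if_neg (by omega)]; exact hg.2.1
          · intro a ha1 ha2
            show (if a+1 = j then d j + 1 else d (a+1)) ≤ (if a = j then d j + 1 else d a)
            by_cases h1 : a + 1 = j
            · rw [if_pos h1, if_neg (by omega), show a = j - 1 by omega, hprev]
              omega
            · rw [if_neg h1]
              by_cases h2 : a = j
              · rw [if_pos h2, h2]
                have := hg.2.2 j (by omega) (by omega)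
                omega
              · rw [if_neg h2]
                exact hg.2.2 a ha1 ha2
        have hd : dp (j+1) < dp j := by
          show (if j+1 = j then d j + 1 else d (j+1)) < (if j = j then d j + 1 else d j)
          rw [if_neg (by omega), if_pos rfl]
          have := hg.2.2 j (by omega) (by omega)
          omega
        obtain ⟨hstep, hgood2, -⟩ :=
          flip_step hl hm hi hgp (j := j) (by omega) (by omega) hd
        have hDeq : Dset l m (fun a => if a = j then dp j - 1 else dp a) = Dset l m d := by
          apply Dset_congr
          intro a ha1 ha2
          by_cases h1 : a = j
          · subst h1
            show (if j = j then dp j - 1 else dp j) = d j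
            rw [if_pos rfl]
            show (if j = j then d j + 1 else d j) - 1 = d j
            rw [if_pos rfl]
            ring
          · show (if a = j then dp j - 1 else dp a) = d a
            rw [if_neg h1]
            show (if a = j then d j + 1 else d a) = d a
            rw [if_neg h1]
        -- measure computation
        have hsump : ∑ j' ∈ Finset.Icc (2:ℤ) m, (l+1-i - dp j')
            = (∑ j' ∈ Finset.Icc (2:ℤ) m, (l+1-i - d j')) - 1 := by
          have hsplit : ∀ j' ∈ Finset.Icc (2:ℤ) m,
              (l+1-i - dp j') = (l+1-i - d j') + (if j' = j then (-1 : ℤ) else 0) := by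
            intro j' hj'
            show (l+1-i - (if j' = j then d j + 1 else d j')) = _
            by_cases h1 : j' = j
            · rw [if_pos h1, if_pos h1, h1]; ring
            · rw [if_neg h1, if_neg h1]; ring
          rw [Finset.sum_congr rfl hsplit, Finset.sum_add_distrib,
            Finset.sum_ite_eq' (Finset.Icc (2:ℤ) m) j (fun _ => (-1:ℤ)),
            if_pos (Finset.mem_Icc.mpr ⟨hjIcc.1, hjIcc.2⟩)]
          ring
        have hterm1 : 1 ≤ l+1-i - d j := by omega
        have hsum_ge : (1:ℤ) ≤ ∑ j' ∈ Finset.Icc (2:ℤ) m, (l+1-i - d j') := by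
          have h := Finset.single_le_sum (f := fun j' => l+1-i - d j')
            (fun j' hj' => term_nonneg hg hj') (Finset.mem_Icc.mpr ⟨hjIcc.1, hjIcc.2⟩)
          omega
        have hNp : Nm l m i dp = Nm l m i d - 1 := by
          unfold Nm
          rw [hsump]
          ring
        have hNple : (Nm l m i dp).toNat ≤ n := by
          have h0 : 0 ≤ (m+l)*i := by positivity
          have : 1 ≤ Nm l m i d := by
            unfold Nm; omega
          omega
        have hr := ih i hi dp hgp hNple
        rw [← hDeq]
        exact Relation.ReflTransGen.tail hr hstep

end Cor75
namespace Cor75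

variable {l m : ℤ}

lemma invariant (hl : 1 ≤ l) (hm : 1 ≤ m) {D : Set Cell}
    (h : D ∈ PExcitedSet ((m:ℤ),-(l:ℤ)) (Lam l m) (Dset l m (d0 l m))) :
    ∃ i : ℤ, 0 ≤ i ∧ ∃ d : ℤ → ℤ, Good l m i d ∧ D = Dset l m d := by
  induction h with
  | refl => exact ⟨0, le_refl _, d0 l m, good_d0 hl hm, rfl⟩
  | tail hab hbc ih =>
      obtain ⟨i, hi, d, hg, rfl⟩ := ih
      obtain ⟨i', hi', d', hg', hE⟩ := classify hl hm hi hg hbc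
      exact ⟨i', hi', d', hg', hE⟩

lemma pr_Dset {d : ℤ → ℤ} :
    pr ((m:ℤ),-(l:ℤ)) '' (Dset l m d)
      = cylDiag m l (fun _ => l+1) \ pr ((m:ℤ),-(l:ℤ)) '' (Pset m d) := by
  unfold Dset cylDiag
  rw [pr_image_diff (fun x hx k => perClosure_shift k hx), pr_image_perClosure]
  rfl

lemma Pset_LPath (hm : 1 ≤ m) {i : ℤ} {d : ℤ → ℤ} (hg : Good l m i d) :
    Pset m d ∈ LPath ((1:ℤ), l+1-i) ((m:ℤ), 1-i) := by
  have hmono : ∀ a, 1 ≤ a → a ≤ (((m-1).toNat : ℤ))+1 → d (a+1) ≤ d a := by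
    intro a h1 h2
    refine hg.2.2 a h1 (by omega)
  have h := stair_path (m-1).toNat d hmono
  rw [show (((m-1).toNat : ℤ)) = m - 1 by omega] at h
  rw [show (m:ℤ) - 1 + 1 = m by ring, show (m:ℤ) - 1 + 2 = m + 1 by ring] at h
  rw [hg.1, hg.2.1] at h
  exact h

lemma LPath_to_Good (hl : 1 ≤ l) (hm : 1 ≤ m) {i : ℤ} {S : Set Cell}
    (hS : S ∈ LPath ((1:ℤ), l+1-i) ((m:ℤ), 1-i)) :
    ∃ d : ℤ → ℤ, Good l m i d ∧ S = Pset m d := by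
  obtain ⟨p, hp, rfl⟩ := hS
  obtain ⟨d, hle, hdu, hdv, hmono, hset⟩ := path_stair p _ _ hp
  have hdu' : d 1 = l+1-i := hdu
  have hdv' : d (m+1) = 1-i := hdv
  have hmono' : ∀ a, 1 ≤ a → a ≤ m → d (a+1) ≤ d a := fun a h1 h2 => hmono a h1 h2
  refine ⟨d, ⟨hdu', hdv', hmono'⟩, ?_⟩
  rw [hset]
  rfl

lemma Pset_mem_topleft (hl : 1 ≤ l) (hm : 1 ≤ m) {i : ℤ} {d : ℤ → ℤ} (hg : Good l m i d) :
    ((1:ℤ), l+1-i) ∈ Pset m d := by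
  have h2 := hg.2.2 1 (le_refl _) hm
  refine ⟨le_refl _, hm, ?_, ?_⟩
  · show d (1+1) ≤ l+1-i
    have := hg.1
    omega
  · show l+1-i ≤ d 1
    have := hg.1
    omega

end Cor75
/-- **Corollary 7.5**: for `λ = ((ℓ+1)^m)` and `μ = (ℓ^{m−1},0)` in `P_{m,ℓ}`, the map
`p ↦ λ̂ ∖ π(p)` is a bijection from `⨆_{i≥0} L((1,ℓ+1−i),(m,1−i))` onto the set of
cylindric excited diagrams of `μ̂` in `λ̂`. -/
theorem cyl_excited_diagrams_from_lattice_paths (l m : ℕ) (hl : 1 ≤ l) (hm : 1 ≤ m) :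
    Function.Injective
      (fun z : Σ i : ℕ, ↥(LPath ((1 : ℤ), (l : ℤ) + 1 - (i : ℤ)) ((m : ℤ), 1 - (i : ℤ))) =>
        cylDiag m l (fun _ => (l : ℤ) + 1) \
          (pr ((m : ℤ), -(l : ℤ)) '' (z.2 : Set Cell))) ∧
    Set.range
      (fun z : Σ i : ℕ, ↥(LPath ((1 : ℤ), (l : ℤ) + 1 - (i : ℤ)) ((m : ℤ), 1 - (i : ℤ))) =>
        cylDiag m l (fun _ => (l : ℤ) + 1) \
          (pr ((m : ℤ), -(l : ℤ)) '' (z.2 : Set Cell))) =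
      CylExcitedSet ((m : ℤ), -(l : ℤ)) (perDiag m l (fun _ => (l : ℤ) + 1))
        (perDiag m l (fun a => if a = (m : ℤ) then 0 else (l : ℤ))) := by
  have hl' : (1:ℤ) ≤ (l:ℤ) := by exact_mod_cast hl
  have hm' : (1:ℤ) ≤ (m:ℤ) := by exact_mod_cast hm
  -- the cylindric diagram of λ is the image of Λ
  have hcylsub : ∀ {i : ℤ} {d : ℤ → ℤ}, 0 ≤ i → Cor75.Good (l:ℤ) (m:ℤ) i d →
      pr ((m:ℤ), -(l:ℤ)) '' (Cor75.Pset (m:ℤ) d) ⊆ cylDiag m l (fun _ => (l:ℤ)+1) := by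
    intro i d hi hg
    intro t ht
    obtain ⟨x, hx, rfl⟩ := ht
    exact ⟨x, Cor75.subset_perClosure (Cor75.Pset_sub_lower hi hg hx), rfl⟩
  constructor
  · -- injectivity
    rintro ⟨i₁, S₁, hS₁⟩ ⟨i₂, S₂, hS₂⟩ h
    simp only [] at h
    obtain ⟨d₁, hg₁, hPd₁⟩ := Cor75.LPath_to_Good hl' hm' (i := (i₁:ℤ)) hS₁
    obtain ⟨d₂, hg₂, hPd₂⟩ := Cor75.LPath_to_Good hl' hm' (i := (i₂:ℤ)) hS₂
    have hsub₁ : pr ((m:ℤ), -(l:ℤ)) '' S₁ ⊆ cylDiag m l (fun _ => (l:ℤ)+1) := by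
      rw [hPd₁]; exact hcylsub (Int.natCast_nonneg i₁) hg₁
    have hsub₂ : pr ((m:ℤ), -(l:ℤ)) '' S₂ ⊆ cylDiag m l (fun _ => (l:ℤ)+1) := by
      rw [hPd₂]; exact hcylsub (Int.natCast_nonneg i₂) hg₂
    have him : pr ((m:ℤ), -(l:ℤ)) '' S₁ = pr ((m:ℤ), -(l:ℤ)) '' S₂ := by
      ext t
      constructor
      · intro ht
        by_contra hc
        have : t ∈ cylDiag m l (fun _ => (l:ℤ)+1) \ pr ((m:ℤ), -(l:ℤ)) '' S₂ :=
          ⟨hsub₁ ht, hc⟩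
        rw [← h] at this
        exact this.2 ht
      · intro ht
        by_contra hc
        have : t ∈ cylDiag m l (fun _ => (l:ℤ)+1) \ pr ((m:ℤ), -(l:ℤ)) '' S₁ :=
          ⟨hsub₂ ht, hc⟩
        rw [h] at this
        exact this.2 ht
    have hSS : S₁ = S₂ := by
      ext x
      constructor
      · intro hx
        have : pr ((m:ℤ), -(l:ℤ)) x ∈ pr ((m:ℤ), -(l:ℤ)) '' S₂ := him ▸ ⟨x, hx, rfl⟩
        obtain ⟨x', hx', hxe⟩ := this
        rw [Cor75.pr_eq_iff] at hxe
        obtain ⟨k, rfl⟩ := hxe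
        have hx'S : x' ∈ Cor75.Strip (m:ℤ) := Cor75.Pset_sub_strip (hPd₂ ▸ hx')
        have hxS : x' + k • ((m:ℤ), -(l:ℤ)) ∈ Cor75.Strip (m:ℤ) :=
          Cor75.Pset_sub_strip (hPd₁ ▸ hx)
        obtain ⟨heq, -⟩ := Cor75.strip_unique hm' hx'S hxS rfl
        rw [heq]
        exact hx'
      · intro hx
        have : pr ((m:ℤ), -(l:ℤ)) x ∈ pr ((m:ℤ), -(l:ℤ)) '' S₁ := him ▸ ⟨x, hx, rfl⟩
        obtain ⟨x', hx', hxe⟩ := this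
        rw [Cor75.pr_eq_iff] at hxe
        obtain ⟨k, rfl⟩ := hxe
        have hx'S : x' ∈ Cor75.Strip (m:ℤ) := Cor75.Pset_sub_strip (hPd₁ ▸ hx')
        have hxS : x' + k • ((m:ℤ), -(l:ℤ)) ∈ Cor75.Strip (m:ℤ) :=
          Cor75.Pset_sub_strip (hPd₂ ▸ hx)
        obtain ⟨heq, -⟩ := Cor75.strip_unique hm' hx'S hxS rfl
        rw [heq]
        exact hx'
    have hii : i₁ = i₂ := by
      have h1 : ((1:ℤ), (l:ℤ)+1-(i₁:ℤ)) ∈ S₂ := by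
        rw [← hSS, hPd₁]
        exact Cor75.Pset_mem_topleft hl' hm' hg₁
      have h2 : ((1:ℤ), (l:ℤ)+1-(i₂:ℤ)) ∈ S₁ := by
        rw [hSS, hPd₂]
        exact Cor75.Pset_mem_topleft hl' hm' hg₂
      rw [hPd₂] at h1
      rw [hPd₁] at h2
      have e1 : (l:ℤ)+1-(i₁:ℤ) ≤ d₂ 1 := h1.2.2.2
      have e2 : (l:ℤ)+1-(i₂:ℤ) ≤ d₁ 1 := h2.2.2.2
      rw [hg₂.1] at e1
      rw [hg₁.1] at e2
      omega
    subst hii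
    exact congrArg (Sigma.mk i₁) (Subtype.ext hSS)
  · -- range equality
    apply Set.Subset.antisymm
    · rintro X ⟨⟨i, S, hS⟩, rfl⟩
      simp only []
      obtain ⟨d, hg, hPd⟩ := Cor75.LPath_to_Good hl' hm' (i := (i:ℤ)) hS
      refine ⟨Cor75.Dset (l:ℤ) (m:ℤ) d, ?_, ?_⟩
      · show _ ∈ PExcitedSet _ _ _
        rw [Cor75.Mu_eq hl' hm']
        exact Cor75.reach hl' hm' (Cor75.Nm (l:ℤ) (m:ℤ) (i:ℤ) d).toNat (i:ℤ)
          (Int.natCast_nonneg i) d hg (le_refl _)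
      · show pr ((m:ℤ), -(l:ℤ)) '' _ = _
        rw [Cor75.pr_Dset, hPd]
    · rintro X ⟨D, hD, rfl⟩
      rw [Cor75.Mu_eq hl' hm'] at hD
      obtain ⟨i, hi, d, hg, rfl⟩ := Cor75.invariant hl' hm' hD
      have hcast : ((i.toNat : ℕ) : ℤ) = i := Int.toNat_of_nonneg hi
      have hLP : Cor75.Pset (m:ℤ) d
          ∈ LPath ((1 : ℤ), (l : ℤ) + 1 - ((i.toNat : ℕ) : ℤ)) ((m : ℤ), 1 - ((i.toNat : ℕ) : ℤ)) := by
        rw [hcast]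
        exact Cor75.Pset_LPath hm' hg
      refine ⟨⟨i.toNat, ⟨Cor75.Pset (m:ℤ) d, hLP⟩⟩, ?_⟩
      simp only []
      rw [Cor75.pr_Dset]
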